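/- arXiv:2603.17569 — 9 statements merged into one kernel-verified Lean document; each statement's English description precedes it below -/
import Mathlib

section
/- Let K⁽⁰⁾ be the block-constant kernel with values (x₀, y₀), and define K⁽ℓ⁾ = A K⁽ℓ⁻¹⁾ A for all ℓ ≥ 1 (the GCN-GP kernel recursion under the SBM). Then for every ℓ ≥ 1, K⁽ℓ⁾ is the block-constant kernel with values (xₗ, yₗ), where xₗ = (1/2)·m^{2ℓ}·[(x₀+y₀)(p+q)^{2ℓ} + (x₀−y₀)(p−q)^{2ℓ}] and yₗ = (1/2)·m^{2ℓ}·[(x₀+y₀)(p+q)^{2ℓ} − (x₀−y₀)(p−q)^{2ℓ}]. -/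
noncomputable section

/-- The m×m all-ones real matrix. -/
def onesJ (m : ℕ) : Matrix (Fin m) (Fin m) ℝ := Matrix.of fun _ _ => 1

/-- The block-constant kernel with values (x, y): the n×n (n = 2m) block matrix
    [[x·J, y·J], [y·J, x·J]]. -/
def blockConst (m : ℕ) (x y : ℝ) : Matrix (Fin m ⊕ Fin m) (Fin m ⊕ Fin m) ℝ :=
  Matrix.fromBlocks (x • onesJ m) (y • onesJ m) (y • onesJ m) (x • onesJ m)

/-- The population two-community SBM adjacency matrix A = [[p·J, q·J], [q·J, p·J]]. -/
def sbmAdj (m : ℕ) (p q : ℝ) : Matrix (Fin m ⊕ Fin m) (Fin m ⊕ Fin m) ℝ :=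
  blockConst m p q

lemma onesJ_mul (m : ℕ) : onesJ m * onesJ m = (m : ℝ) • onesJ m := by
  ext i j
  simp [onesJ, Matrix.mul_apply]

lemma blockConst_mul (m : ℕ) (a b c d : ℝ) :
    blockConst m a b * blockConst m c d =
      blockConst m ((m : ℝ) * (a * c + b * d)) ((m : ℝ) * (a * d + b * c)) := by
  simp only [blockConst, Matrix.fromBlocks_multiply, Matrix.smul_mul, Matrix.mul_smul,
    onesJ_mul, smul_smul, ← add_smul]
  congr 1 <;> ring_nf

/-- GCN-GP kernel recursion under the SBM: closed form of the kernel at layer ℓ ≥ 1. -/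
theorem stmt0 (m : ℕ) (hm : 1 ≤ m) (p q x₀ y₀ : ℝ)
    (K : ℕ → Matrix (Fin m ⊕ Fin m) (Fin m ⊕ Fin m) ℝ)
    (hK0 : K 0 = blockConst m x₀ y₀)
    (hK : ∀ ℓ, K (ℓ + 1) = sbmAdj m p q * K ℓ * sbmAdj m p q) :
    ∀ ℓ, 1 ≤ ℓ →
      K ℓ = blockConst m
        ((1 / 2) * (m : ℝ) ^ (2 * ℓ) *
          ((x₀ + y₀) * (p + q) ^ (2 * ℓ) + (x₀ - y₀) * (p - q) ^ (2 * ℓ)))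
        ((1 / 2) * (m : ℝ) ^ (2 * ℓ) *
          ((x₀ + y₀) * (p + q) ^ (2 * ℓ) - (x₀ - y₀) * (p - q) ^ (2 * ℓ))) := by
  have main : ∀ ℓ, K ℓ = blockConst m
        ((1 / 2) * (m : ℝ) ^ (2 * ℓ) *
          ((x₀ + y₀) * (p + q) ^ (2 * ℓ) + (x₀ - y₀) * (p - q) ^ (2 * ℓ)))
        ((1 / 2) * (m : ℝ) ^ (2 * ℓ) *
          ((x₀ + y₀) * (p + q) ^ (2 * ℓ) - (x₀ - y₀) * (p - q) ^ (2 * ℓ))) := by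
    intro ℓ
    induction ℓ with
    | zero => rw [hK0]; congr 1 <;> · simp; ring
    | succ n ih =>
        rw [hK, ih, sbmAdj, blockConst_mul, blockConst_mul]
        congr 1 <;> · ring_nf
  exact fun ℓ _ => main ℓ
end
end

section
/- If K is the block-constant kernel with values (x, y), then the GAT-GP one-step update K ⊙ (A K A) + A (K ⊙ K) A is the block-constant kernel with values (x′, y′), where x′ = m²·[2(p²+q²)x² + 2pq(xy + y²)] and y′ = m²·[2(p²+q²)y² + 2pq(xy + x²)]. -/
noncomputable section

lemma blockConst_apply (m : ℕ) (x y : ℝ) :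
    ∀ i j, blockConst m x y i j = (Sum.elim (fun _ => Sum.elim (fun _ => x) (fun _ => y))
      (fun _ => Sum.elim (fun _ => y) (fun _ => x)) i) j := by
  rintro (i|i) (j|j) <;> simp [blockConst, onesJ, Matrix.fromBlocks]

lemma blockConst_hadamard (m : ℕ) (a b c d : ℝ) :
    Matrix.hadamard (blockConst m a b) (blockConst m c d) = blockConst m (a * c) (b * d) := by
  ext i j
  simp only [Matrix.hadamard_apply, blockConst_apply]
  rcases i with i | i <;> rcases j with j | j <;> simp

/-- One step of the GAT-GP kernel update K ⊙ (A K A) + A (K ⊙ K) A maps a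
    block-constant kernel with values (x, y) to the block-constant kernel with
    values (x′, y′). -/
theorem stmt3 (m : ℕ) (hm : 1 ≤ m) (p q x y : ℝ) :
    Matrix.hadamard (blockConst m x y)
        (sbmAdj m p q * blockConst m x y * sbmAdj m p q)
      + sbmAdj m p q * Matrix.hadamard (blockConst m x y) (blockConst m x y) * sbmAdj m p q
      = blockConst m
          ((m : ℝ) ^ 2 * (2 * (p ^ 2 + q ^ 2) * x ^ 2 + 2 * p * q * (x * y + y ^ 2)))
          ((m : ℝ) ^ 2 * (2 * (p ^ 2 + q ^ 2) * y ^ 2 + 2 * p * q * (x * y + x ^ 2))) := by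
  simp only [sbmAdj, blockConst_mul, blockConst_hadamard]
  ext i j
  simp only [blockConst_apply, Matrix.add_apply, Matrix.hadamard_apply]
  rcases i with i | i <;> rcases j with j | j <;> simp <;> ring
end
end

section
/- Let m, p, q be real numbers and let (xₗ)ₗ≥₀ and (yₗ)ₗ≥₀ be real sequences satisfying the GAT-GP SBM recurrences x_{ℓ+1} = m²·[2(p²+q²)xₗ² + 2pq(xₗyₗ + yₗ²)] and y_{ℓ+1} = m²·[2(p²+q²)yₗ² + 2pq(xₗyₗ + xₗ²)]. Then for every ℓ ≥ 0 the difference satisfies the product formula xₗ − yₗ = (x₀ − y₀)·[2m²(p² − pq + q²)]^ℓ · ∏_{j=0}^{ℓ−1} (xⱼ + yⱼ). -/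
/-- Product formula for the difference sequence of the GAT-GP SBM recurrences:
    xₗ − yₗ = (x₀ − y₀)·[2m²(p² − pq + q²)]^ℓ · ∏_{j<ℓ} (xⱼ + yⱼ). -/
theorem stmt6 (m p q : ℝ) (x y : ℕ → ℝ)
    (hx : ∀ ℓ, x (ℓ + 1)
      = m ^ 2 * (2 * (p ^ 2 + q ^ 2) * (x ℓ) ^ 2 + 2 * p * q * (x ℓ * y ℓ + (y ℓ) ^ 2)))
    (hy : ∀ ℓ, y (ℓ + 1)
      = m ^ 2 * (2 * (p ^ 2 + q ^ 2) * (y ℓ) ^ 2 + 2 * p * q * (x ℓ * y ℓ + (x ℓ) ^ 2))) :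
    ∀ ℓ, x ℓ - y ℓ
      = (x 0 - y 0) * (2 * m ^ 2 * (p ^ 2 - p * q + q ^ 2)) ^ ℓ
        * ∏ j ∈ Finset.range ℓ, (x j + y j) := by
  intro ℓ
  induction ℓ with
  | zero => simp
  | succ n ih =>
    have key : x (n + 1) - y (n + 1)
        = 2 * m ^ 2 * (p ^ 2 - p * q + q ^ 2) * (x n - y n) * (x n + y n) := by
      rw [hx n, hy n]; ring
    rw [key, ih, Finset.prod_range_succ, pow_succ]; ring
end

section
/- Let m, p, q, x₀, y₀ be real numbers with m ≠ 0, p > 0, q > 0, x₀ + y₀ > 0 and x₀ − y₀ > 0; set β = m²(p+q)², G = (x₀+y₀)·β, F = 2(p² − pq + q²)/(p+q)², r = (x₀−y₀)/(x₀+y₀), and define xₗ = (1/2)·(G^{2^ℓ}/β)·(1 + r·F^ℓ) and yₗ = (1/2)·(G^{2^ℓ}/β)·(1 − r·F^ℓ). Then yₗ/xₗ = (1 − r·F^ℓ)/(1 + r·F^ℓ) for all ℓ, and if F ≥ 1 the limit γ = lim_{ℓ→∞} yₗ/xₗ exists and is strictly less than 1 — namely γ = (1−r)/(1+r) if F = 1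 and γ = −1 if F > 1 — so the normalized GAT-GP kernel does not converge to the all-ones matrix (no oversmoothing). -/
/-- GAT-GP avoids oversmoothing under the SBM: the ratio of inter- to intra-community
    kernel values is (1 − r·F^ℓ)/(1 + r·F^ℓ); if F ≥ 1 the limit γ exists, is strictly
    less than 1 (namely (1−r)/(1+r) if F = 1 and −1 if F > 1), so the normalized kernel
    does not converge to the all-ones matrix. -/
theorem stmt9 (m p q x₀ y₀ : ℝ) (hm : m ≠ 0) (hp : 0 < p) (hq : 0 < q)
    (hsum : 0 < x₀ + y₀) (hdiff : 0 < x₀ - y₀)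
    (β G F r : ℝ)
    (hβ : β = m ^ 2 * (p + q) ^ 2)
    (hG : G = (x₀ + y₀) * β)
    (hF : F = 2 * (p ^ 2 - p * q + q ^ 2) / (p + q) ^ 2)
    (hr : r = (x₀ - y₀) / (x₀ + y₀))
    (x y : ℕ → ℝ)
    (hx : ∀ ℓ, x ℓ = (1 / 2) * (G ^ (2 ^ ℓ) / β) * (1 + r * F ^ ℓ))
    (hy : ∀ ℓ, y ℓ = (1 / 2) * (G ^ (2 ^ ℓ) / β) * (1 - r * F ^ ℓ)) :
    (∀ ℓ, y ℓ / x ℓ = (1 - r * F ^ ℓ) / (1 + r * F ^ ℓ))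
    ∧ (1 ≤ F → ∃ γ : ℝ,
        Filter.Tendsto (fun ℓ => y ℓ / x ℓ) Filter.atTop (nhds γ)
        ∧ γ < 1
        ∧ (F = 1 → γ = (1 - r) / (1 + r))
        ∧ (1 < F → γ = -1)) := by
  have hβpos : 0 < β := by
    rw [hβ]; positivity
  have hGpos : 0 < G := by rw [hG]; positivity
  have hrpos : 0 < r := by rw [hr]; positivity
  have key : ∀ ℓ, y ℓ / x ℓ = (1 - r * F ^ ℓ) / (1 + r * F ^ ℓ) := by
    intro ℓ
    rw [hx, hy]
    have hc : (1 / 2 : ℝ) * (G ^ (2 ^ ℓ) / β) ≠ 0 := by positivity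
    rw [mul_div_mul_left _ _ hc]
  refine ⟨key, fun hF1 => ?_⟩
  rcases eq_or_lt_of_le hF1 with hFeq | hFlt
  · refine ⟨(1 - r) / (1 + r), ?_, ?_, fun _ => rfl, fun h => by linarith⟩
    · have : (fun ℓ => y ℓ / x ℓ) = fun ℓ => (1 - r) / (1 + r) := by
        funext ℓ; rw [key ℓ, ← hFeq, one_pow, mul_one]
      rw [this]; exact tendsto_const_nhds
    · rw [div_lt_one (by linarith)]; linarith
  · refine ⟨-1, ?_, by norm_num, fun h => by linarith, fun _ => rfl⟩
    have htend : Filter.Tendsto (fun ℓ : ℕ => 1 + r * F ^ ℓ) Filter.atTop Filter.atTop := by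
      apply Filter.tendsto_atTop_add_const_left
      exact (tendsto_pow_atTop_atTop_of_one_lt hFlt).const_mul_atTop hrpos
    have h0 : Filter.Tendsto (fun ℓ : ℕ => 2 / (1 + r * F ^ ℓ)) Filter.atTop (nhds 0) :=
      Filter.Tendsto.div_atTop tendsto_const_nhds htend
    have h2 : Filter.Tendsto (fun ℓ : ℕ => -1 + 2 / (1 + r * F ^ ℓ)) Filter.atTop
        (nhds (-1 + 0)) := Filter.Tendsto.const_add _ h0
    rw [add_zero] at h2
    apply h2.congr'
    filter_upwards [htend.eventually_gt_atTop 0] with ℓ hℓ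
    rw [key ℓ]
    field_simp
    ring
end

section
/- Let U be an n×n real orthogonal matrix whose first column is v₁ and whose second column is v₂, let λ̄ ∈ ℝⁿ with first two coordinates λ̄₁, λ̄₂, and set the Specformer spectral filter S = U·diag(λ̄)·Uᵀ. Let K⁽⁰⁾ be the block-constant kernel with values (x₀, y₀) and define K⁽ℓ⁾ = S·K⁽ℓ⁻¹⁾·S for ℓ ≥ 1. Then for every ℓ ≥ 0, K⁽ℓ⁾ is the block-constant kernel with values (xₗ, yₗ), where xₗ = (1/2)·[(x₀+y₀)·λ̄₁^{2ℓ} + (x₀−y₀)·λ̄₂^{2ℓ}] and yₗ = (1/2)·[(x₀+y₀)·λ̄₁^{2ℓ} − (x₀−y₀)·λ̄₂^{2ℓ}]. -/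
noncomputable section

open Matrix

/-- v₁ = (1/√n)·1ₙ with n = 2m. -/
def vOne (m : ℕ) : Fin m ⊕ Fin m → ℝ := fun _ => 1 / Real.sqrt (2 * m)

/-- v₂ = (1/√n)·(1ₘ, −1ₘ) with n = 2m. -/
def vTwo (m : ℕ) : Fin m ⊕ Fin m → ℝ :=
  Sum.elim (fun _ => 1 / Real.sqrt (2 * m)) (fun _ => -(1 / Real.sqrt (2 * m)))

lemma aux_mul_vecMulVec {n : Type*} [Fintype n] (A : Matrix n n ℝ) (v w : n → ℝ) :
    A * Matrix.vecMulVec v w = Matrix.vecMulVec (A *ᵥ v) w := by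
  ext i j
  simp only [Matrix.mul_apply, Matrix.vecMulVec_apply, Matrix.mulVec, dotProduct,
    Finset.sum_mul]
  exact Finset.sum_congr rfl fun k _ => by ring

lemma aux_vecMulVec_mul {n : Type*} [Fintype n] (A : Matrix n n ℝ) (v w : n → ℝ) :
    Matrix.vecMulVec v w * A = Matrix.vecMulVec v (Aᵀ *ᵥ w) := by
  ext i j
  simp only [Matrix.mul_apply, Matrix.vecMulVec_apply, Matrix.mulVec, dotProduct,
    Matrix.transpose_apply, Finset.mul_sum]
  exact Finset.sum_congr rfl fun k _ => by ring

lemma aux_vecMulVec_smul {n : Type*} (c d : ℝ) (v w : n → ℝ) :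
    Matrix.vecMulVec (c • v) (d • w) = (c * d) • Matrix.vecMulVec v w := by
  ext i j
  simp [Matrix.vecMulVec_apply]
  ring

/-- Specformer-GP kernel under the SBM: with the spectral filter S = U·diag(λ̄)·Uᵀ,
    where U is orthogonal with one column v₁ (filter coefficient λ̄₁) and another
    column v₂ (filter coefficient λ̄₂), the kernel recursion K⁽ℓ⁾ = S K⁽ℓ⁻¹⁾ S started
    at the block-constant kernel (x₀, y₀) stays block-constant with values
    xₗ = ½[(x₀+y₀)λ̄₁^{2ℓ} + (x₀−y₀)λ̄₂^{2ℓ}] and yₗ = ½[(x₀+y₀)λ̄₁^{2ℓ} − (x₀−y₀)λ̄₂^{2ℓ}]. -/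
theorem stmt13 (m : ℕ) (hm : 1 ≤ m) (x₀ y₀ l₁ l₂ : ℝ)
    (U : Matrix (Fin m ⊕ Fin m) (Fin m ⊕ Fin m) ℝ)
    (hU1 : Uᵀ * U = 1) (hU2 : U * Uᵀ = 1)
    (e₁ e₂ : Fin m ⊕ Fin m) (he : e₁ ≠ e₂)
    (hcol1 : ∀ i, U i e₁ = vOne m i) (hcol2 : ∀ i, U i e₂ = vTwo m i)
    (lam : Fin m ⊕ Fin m → ℝ) (hl1 : lam e₁ = l₁) (hl2 : lam e₂ = l₂)
    (S : Matrix (Fin m ⊕ Fin m) (Fin m ⊕ Fin m) ℝ)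
    (hS : S = U * Matrix.diagonal lam * Uᵀ)
    (K : ℕ → Matrix (Fin m ⊕ Fin m) (Fin m ⊕ Fin m) ℝ)
    (hK0 : K 0 = blockConst m x₀ y₀)
    (hK : ∀ ℓ, K (ℓ + 1) = S * K ℓ * S) :
    ∀ ℓ, K ℓ = blockConst m
        ((1 / 2) * ((x₀ + y₀) * l₁ ^ (2 * ℓ) + (x₀ - y₀) * l₂ ^ (2 * ℓ)))
        ((1 / 2) * ((x₀ + y₀) * l₁ ^ (2 * ℓ) - (x₀ - y₀) * l₂ ^ (2 * ℓ))) := by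
  have hm0 : (m : ℝ) ≠ 0 := by positivity
  have h2m : (0:ℝ) < 2 * m := by positivity
  have hs : Real.sqrt (2 * m) * Real.sqrt (2 * m) = 2 * m :=
    Real.mul_self_sqrt h2m.le
  have hsne : Real.sqrt (2 * m) ≠ 0 := by positivity
  have hinv : 1 / Real.sqrt (2 * m) * (1 / Real.sqrt (2 * m)) = 1 / (2 * m) := by
    rw [div_mul_div_comm, hs, one_mul]
  -- decomposition of blockConst in terms of rank-one matrices
  have hdecomp : ∀ x y : ℝ, blockConst m x y =
      ((m : ℝ) * (x + y)) • Matrix.vecMulVec (vOne m) (vOne m)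
      + ((m : ℝ) * (x - y)) • Matrix.vecMulVec (vTwo m) (vTwo m) := by
    intro x y
    ext i j
    rcases i with i | i <;> rcases j with j | j <;>
      simp only [blockConst, onesJ, vOne, vTwo, Matrix.fromBlocks_apply₁₁,
        Matrix.fromBlocks_apply₁₂, Matrix.fromBlocks_apply₂₁, Matrix.fromBlocks_apply₂₂,
        Matrix.add_apply, Matrix.smul_apply, Matrix.vecMulVec_apply, Sum.elim_inl,
        Sum.elim_inr, Matrix.of_apply, smul_eq_mul, mul_one, mul_neg, neg_mul,
        neg_neg] <;>
      rw [hinv] <;> field_simp <;> ring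
  -- eigenvector computations
  have hcol : ∀ (e : Fin m ⊕ Fin m), S *ᵥ (fun i => U i e) = lam e • (fun i => U i e) := by
    intro e
    have h1 : (fun i => U i e) = U *ᵥ Pi.single e 1 := by
      funext i; simp [Matrix.mulVec_single]
    rw [h1, hS, Matrix.mulVec_mulVec, Matrix.mul_assoc, hU1, Matrix.mul_one,
      ← Matrix.mulVec_mulVec, Matrix.diagonal_mulVec_single, mul_one]
    funext i
    simp [Matrix.mulVec_single, Pi.single_apply, Matrix.mulVec, dotProduct,
      mul_comm]
  have hv1 : S *ᵥ vOne m = l₁ • vOne m := by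
    have := hcol e₁
    have he1 : (fun i => U i e₁) = vOne m := funext hcol1
    rwa [he1, hl1] at this
  have hv2 : S *ᵥ vTwo m = l₂ • vTwo m := by
    have := hcol e₂
    have he2 : (fun i => U i e₂) = vTwo m := funext hcol2
    rwa [he2, hl2] at this
  have hSsymm : Sᵀ = S := by
    rw [hS]
    simp [Matrix.transpose_mul, Matrix.diagonal_transpose, Matrix.mul_assoc]
  have hP : ∀ (v : Fin m ⊕ Fin m → ℝ) (l : ℝ), S *ᵥ v = l • v →
      S * Matrix.vecMulVec v v * S = (l ^ 2) • Matrix.vecMulVec v v := by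
    intro v l hv
    rw [aux_mul_vecMulVec, aux_vecMulVec_mul, hSsymm, hv, aux_vecMulVec_smul]
    ring_nf
  -- one-step lemma
  have hstep : ∀ x y : ℝ, S * blockConst m x y * S =
      blockConst m ((l₁ ^ 2 * (x + y) + l₂ ^ 2 * (x - y)) / 2)
        ((l₁ ^ 2 * (x + y) - l₂ ^ 2 * (x - y)) / 2) := by
    intro x y
    rw [hdecomp x y, Matrix.mul_add, Matrix.add_mul, Matrix.mul_smul, Matrix.smul_mul,
      Matrix.mul_smul, Matrix.smul_mul, hP _ _ hv1, hP _ _ hv2,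
      hdecomp ((l₁ ^ 2 * (x + y) + l₂ ^ 2 * (x - y)) / 2)
        ((l₁ ^ 2 * (x + y) - l₂ ^ 2 * (x - y)) / 2)]
    congr 1
    · rw [smul_smul]; congr 1; field_simp; ring
    · rw [smul_smul]; congr 1; field_simp; ring
  intro ℓ
  induction ℓ with
  | zero =>
    rw [hK0]
    congr 1 <;> simp <;> ring
  | succ n ih =>
    rw [hK, ih, hstep]
    congr 1 <;> · field_simp; ring
end
end

section
/- Let U be an n×n real orthogonal matrix whose first column is v₁ and whose second column is v₂, and let λ̄ ∈ ℝⁿ have first coordinate λ̄₁ = m(p+q) and second coordinate λ̄₂ = m(p−q). Set S = U·diag(λ̄)·Uᵀ and let K⁽⁰⁾ be the block-constant kernel with values (x₀, y₀). Then for every ℓ ≥ 0, Sᵉ·K⁽⁰⁾·Sᵉ = Aᵉ·K⁽⁰⁾·Aᵉ (matrix powers ℓ on each side), i.e., the Specformer-GP kernel recursion collapses exactly to the GCN-GP kernel recursion under the SBM. -/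
noncomputable section

open Matrix

lemma mul_vecMulVec' {n : Type*} [Fintype n] (M : Matrix n n ℝ) (u v : n → ℝ) :
    M * vecMulVec u v = vecMulVec (M *ᵥ u) v := by
  ext i j
  simp [Matrix.mul_apply, Matrix.vecMulVec_apply, Matrix.mulVec, dotProduct,
    Finset.sum_mul, mul_assoc]

lemma blockConst_mul_s14 (m : ℕ) (x y x' y' : ℝ) :
    blockConst m x y * blockConst m x' y'
      = blockConst m ((m : ℝ) * (x * x' + y * y')) ((m : ℝ) * (x * y' + y * x')) := by
  ext i j
  cases i <;> cases j <;>
    simp [blockConst, onesJ, Matrix.mul_apply, Fintype.sum_sum_type,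
      Finset.sum_const, Finset.card_univ, nsmul_eq_mul] <;> ring

lemma blockConst_transpose (m : ℕ) (x y : ℝ) : (blockConst m x y)ᵀ = blockConst m x y := by
  ext i j
  cases i <;> cases j <;> simp [blockConst, onesJ]

lemma blockConst_decomp (m : ℕ) (hm : 1 ≤ m) (x y : ℝ) :
    blockConst m x y
      = ((m : ℝ) * (x + y)) • vecMulVec (vOne m) (vOne m)
        + ((m : ℝ) * (x - y)) • vecMulVec (vTwo m) (vTwo m) := by
  have hm1 : (1 : ℝ) ≤ (m : ℝ) := by exact_mod_cast hm
  have hm0 : (0 : ℝ) < 2 * m := by linarith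
  have hs : Real.sqrt (2 * m) * Real.sqrt (2 * m) = 2 * m := Real.mul_self_sqrt hm0.le
  have h2 : (1 / Real.sqrt (2 * m)) * (1 / Real.sqrt (2 * m)) = 1 / (2 * m) := by
    rw [div_mul_div_comm, one_mul, hs]
  ext i j
  cases i <;> cases j <;>
    · simp only [blockConst, onesJ, vOne, vTwo, Matrix.vecMulVec_apply, Matrix.add_apply,
        Matrix.smul_apply, Matrix.fromBlocks_apply₁₁, Matrix.fromBlocks_apply₁₂,
        Matrix.fromBlocks_apply₂₁, Matrix.fromBlocks_apply₂₂, Matrix.of_apply,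
        Sum.elim_inl, Sum.elim_inr, smul_eq_mul, mul_one, mul_neg, neg_mul, neg_neg]
      rw [h2]
      field_simp
      ring

section eig

variable {m : ℕ} {p q : ℝ} (hm : 1 ≤ m)
  {U : Matrix (Fin m ⊕ Fin m) (Fin m ⊕ Fin m) ℝ}
  (hU1 : Uᵀ * U = 1)
  {e₁ e₂ : Fin m ⊕ Fin m}
  (hcol1 : ∀ i, U i e₁ = vOne m i) (hcol2 : ∀ i, U i e₂ = vTwo m i)
  {lam : Fin m ⊕ Fin m → ℝ}
  (hl1 : lam e₁ = (m : ℝ) * (p + q)) (hl2 : lam e₂ = (m : ℝ) * (p - q))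
  {S : Matrix (Fin m ⊕ Fin m) (Fin m ⊕ Fin m) ℝ}
  (hS : S = U * Matrix.diagonal lam * Uᵀ)

include hU1 hcol1 hl1 hS in
lemma S_mulVec_vOne : S *ᵥ vOne m = ((m : ℝ) * (p + q)) • vOne m := by
  have h1 : Uᵀ *ᵥ vOne m = Pi.single e₁ 1 := by
    ext j
    have : (Uᵀ *ᵥ vOne m) j = (Uᵀ * U) j e₁ := by
      simp only [Matrix.mulVec, Matrix.mul_apply, dotProduct, Matrix.transpose_apply]
      exact Finset.sum_congr rfl fun i _ => by rw [hcol1 i]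
    rw [this, hU1, Matrix.one_apply, Pi.single_apply]
  have hcol : U *ᵥ Pi.single e₁ (lam e₁) = lam e₁ • vOne m := by
    ext i
    simp [Matrix.mulVec, dotProduct, Pi.single_apply, hcol1 i, mul_comm]
  rw [hS, ← Matrix.mulVec_mulVec, ← Matrix.mulVec_mulVec, h1,
    Matrix.diagonal_mulVec_single, mul_one, hcol, hl1]

include hU1 hcol2 hl2 hS in
lemma S_mulVec_vTwo : S *ᵥ vTwo m = ((m : ℝ) * (p - q)) • vTwo m := by
  have h1 : Uᵀ *ᵥ vTwo m = Pi.single e₂ 1 := by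
    ext j
    have : (Uᵀ *ᵥ vTwo m) j = (Uᵀ * U) j e₂ := by
      simp only [Matrix.mulVec, Matrix.mul_apply, dotProduct, Matrix.transpose_apply]
      exact Finset.sum_congr rfl fun i _ => by rw [hcol2 i]
    rw [this, hU1, Matrix.one_apply, Pi.single_apply]
  have hcol : U *ᵥ Pi.single e₂ (lam e₂) = lam e₂ • vTwo m := by
    ext i
    simp [Matrix.mulVec, dotProduct, Pi.single_apply, hcol2 i, mul_comm]
  rw [hS, ← Matrix.mulVec_mulVec, ← Matrix.mulVec_mulVec, h1,
    Matrix.diagonal_mulVec_single, mul_one, hcol, hl2]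

end eig

lemma A_mulVec_vOne (m : ℕ) (p q : ℝ) :
    sbmAdj m p q *ᵥ vOne m = ((m : ℝ) * (p + q)) • vOne m := by
  ext i
  cases i <;>
    · simp [sbmAdj, blockConst, onesJ, vOne, Matrix.mulVec, dotProduct,
        Fintype.sum_sum_type, Finset.sum_const, Finset.card_univ, nsmul_eq_mul]
      ring

lemma A_mulVec_vTwo (m : ℕ) (p q : ℝ) :
    sbmAdj m p q *ᵥ vTwo m = ((m : ℝ) * (p - q)) • vTwo m := by
  ext i
  cases i <;>
    · simp [sbmAdj, blockConst, onesJ, vTwo, Matrix.mulVec, dotProduct,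
        Fintype.sum_sum_type, Finset.sum_const, Finset.card_univ, nsmul_eq_mul]
      ring

/-- Specformer collapses to GCN: if the learned spectral filter has coefficient
    m(p+q) on the eigendirection v₁ and m(p−q) on v₂, then the Specformer-GP kernel
    recursion coincides exactly with the GCN-GP recursion under the SBM:
    Sᵉ K⁽⁰⁾ Sᵉ = Aᵉ K⁽⁰⁾ Aᵉ for all ℓ. -/
theorem stmt14 (m : ℕ) (hm : 1 ≤ m) (p q x₀ y₀ : ℝ)
    (U : Matrix (Fin m ⊕ Fin m) (Fin m ⊕ Fin m) ℝ)
    (hU1 : Uᵀ * U = 1) (hU2 : U * Uᵀ = 1)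
    (e₁ e₂ : Fin m ⊕ Fin m) (he : e₁ ≠ e₂)
    (hcol1 : ∀ i, U i e₁ = vOne m i) (hcol2 : ∀ i, U i e₂ = vTwo m i)
    (lam : Fin m ⊕ Fin m → ℝ)
    (hl1 : lam e₁ = (m : ℝ) * (p + q)) (hl2 : lam e₂ = (m : ℝ) * (p - q))
    (S : Matrix (Fin m ⊕ Fin m) (Fin m ⊕ Fin m) ℝ)
    (hS : S = U * Matrix.diagonal lam * Uᵀ) :
    ∀ ℓ : ℕ,
      S ^ ℓ * blockConst m x₀ y₀ * S ^ ℓ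
        = sbmAdj m p q ^ ℓ * blockConst m x₀ y₀ * sbmAdj m p q ^ ℓ := by
  set A := sbmAdj m p q with hA
  -- S acts like A on any block-constant matrix
  have hSv1 : S *ᵥ vOne m = ((m : ℝ) * (p + q)) • vOne m :=
    S_mulVec_vOne hU1 hcol1 hl1 hS
  have hSv2 : S *ᵥ vTwo m = ((m : ℝ) * (p - q)) • vTwo m :=
    S_mulVec_vTwo hU1 hcol2 hl2 hS
  have hmulK : ∀ x y : ℝ, S * blockConst m x y = A * blockConst m x y := by
    intro x y
    rw [blockConst_decomp m hm x y, Matrix.mul_add, Matrix.mul_add,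
      Matrix.mul_smul, Matrix.mul_smul, Matrix.mul_smul, Matrix.mul_smul,
      mul_vecMulVec', mul_vecMulVec', mul_vecMulVec', mul_vecMulVec',
      hSv1, hSv2, A_mulVec_vOne, A_mulVec_vTwo]
  have hSt : Sᵀ = S := by
    rw [hS]
    simp [Matrix.transpose_mul, Matrix.diagonal_transpose, Matrix.mul_assoc]
  have hKmul : ∀ x y : ℝ, blockConst m x y * S = blockConst m x y * A := by
    intro x y
    have h1 : blockConst m x y * S = (S * blockConst m x y)ᵀ := by
      rw [Matrix.transpose_mul, blockConst_transpose, hSt]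
    have h2 : blockConst m x y * A = (A * blockConst m x y)ᵀ := by
      rw [Matrix.transpose_mul, blockConst_transpose, hA]
      rw [show (sbmAdj m p q)ᵀ = sbmAdj m p q from blockConst_transpose m p q]
    rw [h1, h2, hmulK]
  -- A^ℓ K A^ℓ is block-constant
  have key : ∀ ℓ : ℕ, ∃ x y : ℝ, A ^ ℓ * blockConst m x₀ y₀ * A ^ ℓ = blockConst m x y := by
    intro ℓ
    induction ℓ with
    | zero => exact ⟨x₀, y₀, by simp⟩
    | succ n ih =>
      obtain ⟨x, y, hxy⟩ := ih
      refine ⟨(m:ℝ)*(((m:ℝ)*(p*x+q*y))*p + ((m:ℝ)*(p*y+q*x))*q),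
        (m:ℝ)*(((m:ℝ)*(p*x+q*y))*q + ((m:ℝ)*(p*y+q*x))*p), ?_⟩
      have h : A ^ (n + 1) * blockConst m x₀ y₀ * A ^ (n + 1)
          = A * (A ^ n * blockConst m x₀ y₀ * A ^ n) * A := by
        nth_rw 1 [pow_succ' A n]
        nth_rw 1 [pow_succ A n]
        simp only [Matrix.mul_assoc]
      rw [h, hxy, hA, show (sbmAdj m p q : Matrix _ _ ℝ) = blockConst m p q from rfl,
        blockConst_mul_s14, blockConst_mul_s14]
  intro ℓ
  induction ℓ with
  | zero => simp
  | succ n ih =>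
    obtain ⟨x, y, hxy⟩ := key n
    have hL : S ^ (n + 1) * blockConst m x₀ y₀ * S ^ (n + 1)
        = S * (S ^ n * blockConst m x₀ y₀ * S ^ n) * S := by
      nth_rw 1 [pow_succ' S n]
      nth_rw 1 [pow_succ S n]
      simp only [Matrix.mul_assoc]
    have hR : A ^ (n + 1) * blockConst m x₀ y₀ * A ^ (n + 1)
        = A * (A ^ n * blockConst m x₀ y₀ * A ^ n) * A := by
      nth_rw 1 [pow_succ' A n]
      nth_rw 1 [pow_succ A n]
      simp only [Matrix.mul_assoc]
    rw [hL, hR, ih, hxy]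
    rw [show S * blockConst m x y * S = (S * blockConst m x y) * S from rfl]
    rw [hmulK x y]
    have : A * blockConst m x y = blockConst m ((m:ℝ)*(p*x+q*y)) ((m:ℝ)*(p*y+q*x)) := by
      rw [hA]; exact blockConst_mul_s14 m p q x y
    rw [this, hKmul]
end
end

section
/- Let λ̄₁, λ̄₂, x₀, y₀ be real numbers with λ̄₁ ≠ 0, |λ̄₂| ≥ |λ̄₁|, x₀ + y₀ > 0 and x₀ − y₀ > 0, and define the Specformer-GP closed-form values xₗ = (1/2)·[(x₀+y₀)·λ̄₁^{2ℓ} + (x₀−y₀)·λ̄₂^{2ℓ}] and yₗ = (1/2)·[(x₀+y₀)·λ̄₁^{2ℓ} − (x₀−y₀)·λ̄₂^{2ℓ}]. Then the limit of yₗ/xₗ as ℓ → ∞ exists and is not equal to 1 — namely it equals y₀/x₀ < 1 if |λ̄₂| = |λ̄₁| and equals −1 if |λ̄₂| > |λ̄₁| — so the Specformer-GP kernel preserves community structure and avoids oversmoothing. -/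
/-- Specformer-GP avoids oversmoothing: for the closed-form intra/inter-community
    values xₗ, yₗ with spectral filter coefficients λ̄₁ ≠ 0 and |λ̄₂| ≥ |λ̄₁|, the
    limit of yₗ/xₗ exists and is not equal to 1 — it equals y₀/x₀ < 1 if |λ̄₂| = |λ̄₁|
    and −1 if |λ̄₂| > |λ̄₁|. -/
theorem stmt15 (l₁ l₂ x₀ y₀ : ℝ) (hl₁ : l₁ ≠ 0) (hl : |l₁| ≤ |l₂|)
    (hsum : 0 < x₀ + y₀) (hdiff : 0 < x₀ - y₀)
    (x y : ℕ → ℝ)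
    (hx : ∀ ℓ, x ℓ = (1 / 2) * ((x₀ + y₀) * l₁ ^ (2 * ℓ) + (x₀ - y₀) * l₂ ^ (2 * ℓ)))
    (hy : ∀ ℓ, y ℓ = (1 / 2) * ((x₀ + y₀) * l₁ ^ (2 * ℓ) - (x₀ - y₀) * l₂ ^ (2 * ℓ))) :
    ∃ γ : ℝ,
      Filter.Tendsto (fun ℓ => y ℓ / x ℓ) Filter.atTop (nhds γ)
      ∧ γ ≠ 1
      ∧ (|l₂| = |l₁| → γ = y₀ / x₀ ∧ y₀ / x₀ < 1)
      ∧ (|l₁| < |l₂| → γ = -1) := by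
  have hl₂ : l₂ ≠ 0 := by
    intro h; rw [h, abs_zero] at hl
    exact hl₁ (abs_nonpos_iff.mp hl)
  have hx₀ : 0 < x₀ := by linarith
  have hyx : y₀ / x₀ < 1 := (div_lt_one hx₀).mpr (by linarith)
  have hl1sq : 0 < l₁ ^ 2 := pow_pos (abs_pos.mpr hl₁) 2 |>.trans_eq (by rw [sq_abs])
  have hl2sq : 0 < l₂ ^ 2 := pow_pos (abs_pos.mpr hl₂) 2 |>.trans_eq (by rw [sq_abs])
  rcases eq_or_lt_of_le hl with heq | hlt
  · -- |l₁| = |l₂|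
    have hsq : l₂ ^ 2 = l₁ ^ 2 := by
      rw [← sq_abs l₁, ← sq_abs l₂, heq]
    refine ⟨y₀ / x₀, ?_, ne_of_lt hyx, fun _ => ⟨rfl, hyx⟩, fun h => absurd heq h.ne⟩
    have hconst : ∀ ℓ, y ℓ / x ℓ = y₀ / x₀ := by
      intro ℓ
      have hp : (l₁ ^ 2) ^ ℓ ≠ 0 := (pow_pos hl1sq ℓ).ne'
      rw [hx, hy, pow_mul, pow_mul, hsq]
      rw [show (1 / 2 : ℝ) * ((x₀ + y₀) * (l₁ ^ 2) ^ ℓ + (x₀ - y₀) * (l₁ ^ 2) ^ ℓ)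
            = x₀ * (l₁ ^ 2) ^ ℓ by ring,
          show (1 / 2 : ℝ) * ((x₀ + y₀) * (l₁ ^ 2) ^ ℓ - (x₀ - y₀) * (l₁ ^ 2) ^ ℓ)
            = y₀ * (l₁ ^ 2) ^ ℓ by ring,
          mul_div_mul_right _ _ hp]
    simp only [hconst]
    exact tendsto_const_nhds
  · -- |l₁| < |l₂|
    have hq : l₁ ^ 2 < l₂ ^ 2 := by
      rw [← sq_abs l₁, ← sq_abs l₂]
      exact pow_lt_pow_left₀ hlt (abs_nonneg _) (by norm_num)
    set q : ℝ := l₁ ^ 2 / l₂ ^ 2 with hqdef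
    have hq0 : 0 ≤ q := le_of_lt (div_pos hl1sq hl2sq)
    have hq1 : q < 1 := (div_lt_one hl2sq).mpr hq
    have htend : Filter.Tendsto (fun ℓ : ℕ => q ^ ℓ) Filter.atTop (nhds 0) :=
      tendsto_pow_atTop_nhds_zero_of_lt_one hq0 hq1
    set A := x₀ + y₀
    set B := x₀ - y₀
    have hrepr : ∀ ℓ, y ℓ / x ℓ = (A * q ^ ℓ - B) / (A * q ^ ℓ + B) := by
      intro ℓ
      have hpℓ : (0 : ℝ) < (l₂ ^ 2) ^ ℓ := pow_pos hl2sq ℓ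
      have hp1 : (0 : ℝ) < (l₁ ^ 2) ^ ℓ := pow_pos hl1sq ℓ
      have hqp : q ^ ℓ = (l₁ ^ 2) ^ ℓ / (l₂ ^ 2) ^ ℓ := by
        rw [hqdef, div_pow]
      have hd1 : (0 : ℝ) < A * (l₁ ^ 2) ^ ℓ + B * (l₂ ^ 2) ^ ℓ :=
        add_pos (mul_pos hsum hp1) (mul_pos hdiff hpℓ)
      have hd2 : (0 : ℝ) < A * q ^ ℓ + B := by
        rw [hqp]
        positivity
      rw [hx, hy, pow_mul, pow_mul, hqp]
      rw [div_eq_div_iff (mul_pos (by norm_num : (0:ℝ) < 1/2) hd1).ne'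
        (by rw [hqp] at hd2; exact hd2.ne')]
      field_simp
    refine ⟨-1, ?_, by norm_num, fun h => absurd h.symm hlt.ne, fun _ => rfl⟩
    simp only [hrepr]
    have h1 : Filter.Tendsto (fun ℓ : ℕ => A * q ^ ℓ - B) Filter.atTop (nhds (A * 0 - B)) :=
      ((htend.const_mul A).sub tendsto_const_nhds)
    have h2 : Filter.Tendsto (fun ℓ : ℕ => A * q ^ ℓ + B) Filter.atTop (nhds (A * 0 + B)) :=
      ((htend.const_mul A).add tendsto_const_nhds)
    have hne : A * 0 + B ≠ 0 := by simpa using hdiff.ne'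
    have h3 := h1.div h2 hne
    have hval : (A * 0 - B) / (A * 0 + B) = -1 := by
      rw [mul_zero, zero_sub, zero_add, neg_div, div_self hdiff.ne']
    rw [hval] at h3
    exact h3
end

section
/- Let n, T, K ≥ 1 be natural numbers, let Ã₁, …, Ã_T and M be fixed n×n real matrices, and on a probability space let {β_i^{(k)} : 1 ≤ i ≤ T, 1 ≤ k ≤ K} be jointly independent real random variables with E[β_i^{(k)}] = 0 and E[(β_i^{(k)})²] = σ_k² for each k. Define the random matrix S = (Σ_{i=1}^T β_i^{(1)}·Ã_i)·(Σ_{i=1}^T β_i^{(2)}·Ã_i)···(Σ_{i=1}^T β_i^{(K)}·Ã_i). Then the entrywise expectation satisfies E[S·M·Sᵀ] = (∏_{k=1}^K σ_k²) · Σ_{i₁=1}^T ··· Σ_{i_K=1}^T Ã_{i₁}···Ã_{i_K}·M·Ã_{i_K}ᵀ···Ã_{i₁}ᵀ. -/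
open MeasureTheory ProbabilityTheory Matrix


/-- Expectation and integrability of a finite product of independent integrable r.v.s. -/
lemma aux_indep_prod {Ω ι : Type*} [MeasurableSpace Ω] {μ : Measure Ω} [IsProbabilityMeasure μ]
    (f : ι → Ω → ℝ) (hmeas : ∀ i, Measurable (f i))
    (hindep : iIndepFun (m := fun _ => (inferInstance : MeasurableSpace ℝ)) f μ)
    (hint : ∀ i, Integrable (f i) μ) (s : Finset ι) :
    Integrable (fun ω => ∏ i ∈ s, f i ω) μ ∧
      (∫ ω, ∏ i ∈ s, f i ω ∂μ) = ∏ i ∈ s, ∫ ω, f i ω ∂μ := by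
  classical
  induction s using Finset.induction_on with
  | empty => simp
  | insert a s hi IH =>
    have hIF : IndepFun (f a) (∏ j ∈ s, f j) μ :=
      (hindep.indepFun_finsetProd_of_notMem hmeas hi).symm
    have hP : Integrable (∏ j ∈ s, f j) μ := by
      have := IH.1
      simpa [Finset.prod_fn] using this
    have hInt : Integrable (fun ω => ∏ i ∈ insert a s, f i ω) μ := by
      have := hIF.integrable_mul (hint a) hP
      simp only [Pi.mul_def, Finset.prod_apply] at this
      simpa [Finset.prod_insert hi] using this
    refine ⟨hInt, ?_⟩
    have h2 := hIF.integral_mul_eq_mul_integral (hint a).1 hP.1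
    simp only [Pi.mul_def, Finset.prod_fn] at h2
    simp [Finset.prod_insert hi, h2, IH.2]

/-- Noncommutative expansion of a product of linear combinations. -/
lemma aux_expand {R A : Type*} [CommSemiring R] [NonAssocSemiring A] [Module R A]
    [SMulCommClass R A A] [IsScalarTower R A A] {T : ℕ} :
    ∀ (K : ℕ) (c : Fin K → Fin T → R) (D : Fin T → A),
      ((List.finRange K).map (fun k => ∑ i, c k i • D i)).prod
        = ∑ g : Fin K → Fin T, (∏ k, c k (g k)) •
            ((List.finRange K).map (fun k => D (g k))).prod := by
  intro K
  induction K with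
  | zero =>
    intro c D
    simp
  | succ K IH =>
    intro c D
    rw [List.finRange_succ]
    simp only [List.map_cons, List.prod_cons, List.map_map]
    have IH' := IH (fun k i => c k.succ i) D
    rw [show ((fun k => ∑ i, c k i • D i) ∘ Fin.succ) = fun k : Fin K => ∑ i, c k.succ i • D i
      from rfl, IH']
    rw [Finset.sum_mul_sum]
    have hpt := Fintype.sum_prod_type (f := fun p : Fin T × (Fin K → Fin T) =>
      c 0 p.1 • D p.1 * (∏ k, c k.succ (p.2 k)) •
        ((List.finRange K).map (fun k => D (p.2 k))).prod)
    rw [← hpt]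
    refine Fintype.sum_equiv (Fin.consEquiv (fun _ : Fin (K+1) => Fin T)) _ _ ?_
    rintro ⟨i, g⟩
    rw [smul_mul_smul_comm, Fin.prod_univ_succ]
    simp [Fin.consEquiv, Function.comp_def]

/-- Second-moment identity for the GTN meta-path operator: if
    S = (Σᵢ βᵢ⁽¹⁾Ãᵢ)···(Σᵢ βᵢ⁽ᴷ⁾Ãᵢ) with jointly independent centered coefficients
    βᵢ⁽ᵏ⁾ of variance σₖ², then entrywise
    E[S·M·Sᵀ] = (∏ₖ σₖ²) · Σ_{i₁,…,i_K} Ã_{i₁}···Ã_{i_K}·M·Ã_{i_K}ᵀ···Ã_{i₁}ᵀ. -/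
theorem stmt16 {Ω : Type*} [MeasurableSpace Ω] (μ : Measure Ω) [IsProbabilityMeasure μ]
    (n T K : ℕ) (hn : 1 ≤ n) (hT : 1 ≤ T) (hK : 1 ≤ K)
    (Atil : Fin T → Matrix (Fin n) (Fin n) ℝ) (M : Matrix (Fin n) (Fin n) ℝ)
    (β : Fin T → Fin K → Ω → ℝ)
    (hmeas : ∀ i k, Measurable (β i k))
    (hindep : iIndepFun (m := fun _ : Fin T × Fin K => (inferInstance : MeasurableSpace ℝ))
      (fun p ω => β p.1 p.2 ω) μ)
    (σ : Fin K → ℝ)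
    (hmean : ∀ i k, ∫ ω, β i k ω ∂μ = 0)
    (hvar : ∀ i k, ∫ ω, (β i k ω) ^ 2 ∂μ = (σ k) ^ 2)
    (hsq : ∀ i k, Integrable (fun ω => (β i k ω) ^ 2) μ)
    (S : Ω → Matrix (Fin n) (Fin n) ℝ)
    (hS : ∀ ω, S ω = ((List.finRange K).map (fun k => ∑ i, β i k ω • Atil i)).prod) :
    (Matrix.of fun a b => ∫ ω, (S ω * M * (S ω)ᵀ) a b ∂μ)
      = (∏ k, (σ k) ^ 2) •
          ∑ g : Fin K → Fin T,
            ((List.finRange K).map (fun k => Atil (g k))).prod * M *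
              (((List.finRange K).map (fun k => Atil (g k))).prod)ᵀ := by
  classical
  set A : (Fin K → Fin T) → Matrix (Fin n) (Fin n) ℝ :=
    fun g => ((List.finRange K).map (fun k => Atil (g k))).prod with hA
  set c : (Fin K → Fin T) → Ω → ℝ := fun g ω => ∏ k, β (g k) k ω with hc
  -- Step 1: expand S
  have hSexp : ∀ ω, S ω = ∑ g : Fin K → Fin T, c g ω • A g := by
    intro ω
    rw [hS ω]
    exact aux_expand K (fun k i => β i k ω) Atil
  -- pointwise expansion of S M Sᵀ
  have hpoint : ∀ ω, S ω * M * (S ω)ᵀ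
      = ∑ g : Fin K → Fin T, ∑ h : Fin K → Fin T,
          (c g ω * c h ω) • (A g * M * (A h)ᵀ) := by
    intro ω
    rw [hSexp ω, Matrix.transpose_sum]
    simp only [Matrix.transpose_smul]
    rw [Finset.sum_mul, Finset.sum_mul_sum]
    refine Finset.sum_congr rfl fun g _ => Finset.sum_congr rfl fun h _ => ?_
    rw [Matrix.mul_smul, Matrix.smul_mul, Matrix.smul_mul, smul_smul, mul_comm (c h ω)]
  -- product identity with exponents
  have key : ∀ g h : Fin K → Fin T, ∀ ω,
      c g ω * c h ω = ∏ p : Fin T × Fin K,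
        β p.1 p.2 ω ^ ((if g p.2 = p.1 then 1 else 0) + (if h p.2 = p.1 then 1 else 0)) := by
    intro g h ω
    have e1 : ∀ (g : Fin K → Fin T),
        (∏ p : Fin T × Fin K, β p.1 p.2 ω ^ (if g p.2 = p.1 then 1 else 0)) = c g ω := by
      intro g
      rw [Fintype.prod_prod_type, Finset.prod_comm]
      refine Finset.prod_congr rfl fun k _ => ?_
      simp [pow_ite, Finset.prod_ite_eq]
    simp only [pow_add, Finset.prod_mul_distrib, e1]
  -- integrability of β
  have hβint : ∀ i k, Integrable (β i k) μ := by
    intro i k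
    refine Integrable.mono' ((integrable_const (1:ℝ)).add (hsq i k))
      (hmeas i k).aestronglyMeasurable ?_
    filter_upwards with ω
    have : |β i k ω| ≤ 1 + β i k ω ^ 2 := by
      nlinarith [sq_nonneg (|β i k ω| - 1), sq_abs (β i k ω)]
    simpa [Real.norm_eq_abs, Pi.add_apply] using this
  -- independent-products machinery for arbitrary exponents ≤ 2
  have main : ∀ (e : Fin T × Fin K → ℕ), (∀ p, e p ≤ 2) →
      Integrable (fun ω => ∏ p : Fin T × Fin K, β p.1 p.2 ω ^ e p) μ ∧
      (∫ ω, ∏ p : Fin T × Fin K, β p.1 p.2 ω ^ e p ∂μ)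
        = ∏ p : Fin T × Fin K, ∫ ω, β p.1 p.2 ω ^ e p ∂μ := by
    intro e he
    refine aux_indep_prod (fun p ω => β p.1 p.2 ω ^ e p)
      (fun p => (hmeas p.1 p.2).pow_const _) ?_ ?_ Finset.univ
    · exact hindep.comp (fun p x => x ^ e p) (fun p => measurable_id.pow_const _)
    · intro p
      have h2 := he p
      obtain h0 | h1 | h2' : e p = 0 ∨ e p = 1 ∨ e p = 2 := by omega
      · simp [h0]
      · simpa [h1] using hβint p.1 p.2
      · simpa [h2'] using hsq p.1 p.2
  -- value of the second moments
  have hval : ∀ g h : Fin K → Fin T,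
      Integrable (fun ω => c g ω * c h ω) μ ∧
      (∫ ω, c g ω * c h ω ∂μ) = if g = h then ∏ k, σ k ^ 2 else 0 := by
    intro g h
    set e : Fin T × Fin K → ℕ :=
      fun p => (if g p.2 = p.1 then 1 else 0) + (if h p.2 = p.1 then 1 else 0) with he
    have hle : ∀ p, e p ≤ 2 := by
      intro p; simp only [he]; split <;> split <;> omega
    obtain ⟨hint, heq⟩ := main e hle
    have hrw : (fun ω => c g ω * c h ω)
        = fun ω => ∏ p : Fin T × Fin K, β p.1 p.2 ω ^ e p := funext (key g h)
    refine ⟨hrw ▸ hint, ?_⟩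
    have : (∫ ω, c g ω * c h ω ∂μ) = ∏ p : Fin T × Fin K, ∫ ω, β p.1 p.2 ω ^ e p ∂μ := by
      rw [show (∫ ω, c g ω * c h ω ∂μ)
          = ∫ ω, ∏ p : Fin T × Fin K, β p.1 p.2 ω ^ e p ∂μ by
        exact congrArg (integral μ) hrw]
      exact heq
    rw [this]
    by_cases hgh : g = h
    · subst hgh
      simp only [if_pos rfl]
      have : ∀ p : Fin T × Fin K, (∫ ω, β p.1 p.2 ω ^ e p ∂μ)
          = if g p.2 = p.1 then σ p.2 ^ 2 else 1 := by
        intro p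
        by_cases hp : g p.2 = p.1
        · simp only [he, hp, if_pos]
          simpa using hvar p.1 p.2
        · simp [he, hp]
      rw [Finset.prod_congr rfl (fun p _ => this p), Fintype.prod_prod_type, Finset.prod_comm]
      refine Finset.prod_congr rfl fun k _ => ?_
      simp [Finset.prod_ite_eq]
    · rw [if_neg hgh]
      obtain ⟨k0, hk0⟩ : ∃ k0, g k0 ≠ h k0 := by
        by_contra hcon
        push_neg at hcon
        exact hgh (funext hcon)
      refine Finset.prod_eq_zero (Finset.mem_univ (g k0, k0)) ?_
      have : e (g k0, k0) = 1 := by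
        simp [he, (Ne.symm hk0 : h k0 ≠ g k0)]
      rw [this]
      simpa using hmean (g k0) k0
  -- final assembly
  ext a b
  rw [Matrix.of_apply]
  have hent : ∀ ω, (S ω * M * (S ω)ᵀ) a b
      = ∑ p : (Fin K → Fin T) × (Fin K → Fin T),
          c p.1 ω * c p.2 ω * ((A p.1 * M * (A p.2)ᵀ) a b) := by
    intro ω
    rw [hpoint ω]
    rw [Fintype.sum_prod_type]
    simp [Matrix.sum_apply, Matrix.smul_apply, smul_eq_mul]
  rw [show (∫ ω, (S ω * M * (S ω)ᵀ) a b ∂μ)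
      = ∫ ω, ∑ p : (Fin K → Fin T) × (Fin K → Fin T),
          c p.1 ω * c p.2 ω * ((A p.1 * M * (A p.2)ᵀ) a b) ∂μ by
    exact congrArg (integral μ) (funext hent)]
  rw [integral_finset_sum _ (fun p _ => ((hval p.1 p.2).1).mul_const _)]
  have : ∀ p : (Fin K → Fin T) × (Fin K → Fin T),
      (∫ ω, c p.1 ω * c p.2 ω * ((A p.1 * M * (A p.2)ᵀ) a b) ∂μ)
        = (if p.1 = p.2 then ∏ k, σ k ^ 2 else 0) * ((A p.1 * M * (A p.2)ᵀ) a b) := by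
    intro p
    rw [integral_mul_const, (hval p.1 p.2).2]
  rw [Finset.sum_congr rfl (fun p _ => this p), Fintype.sum_prod_type]
  simp only [ite_mul, zero_mul, Finset.sum_ite_eq, Finset.mem_univ, if_pos]
  simp [Matrix.smul_apply, Matrix.sum_apply, Finset.mul_sum, hA]
end

section
/- Let U be an n×n real orthogonal matrix, M a fixed n×n real matrix, and let λ, λ′ : Ω → ℝⁿ be random vectors on a probability space with E[|λ_a·λ′_b|] < ∞ for all indices a, b. Define the matrix K_λ by (K_λ)_{ab} = E[λ_a·λ′_b]. Then the entrywise expectation satisfies E[(U·diag(λ)·Uᵀ)·M·(U·diag(λ′)·Uᵀ)] = U·(K_λ ⊙ (Uᵀ·M·U))·Uᵀ, where ⊙ denotes the entrywise (Hadamard) product. -/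
open MeasureTheory Matrix

/-- Specformer-GP node-level kernel identity: for an orthogonal matrix U, a fixed
    matrix M, and random spectral coefficient vectors λ, λ′ with integrable products,
    E[(U·diag(λ)·Uᵀ)·M·(U·diag(λ′)·Uᵀ)] = U·(K_λ ⊙ (Uᵀ·M·U))·Uᵀ entrywise, where
    (K_λ)_{ab} = E[λ_a·λ′_b] and ⊙ is the Hadamard product. -/
theorem stmt17 {Ω : Type*} [MeasurableSpace Ω] (μ : Measure Ω) [IsProbabilityMeasure μ]
    (n : ℕ) (U M : Matrix (Fin n) (Fin n) ℝ)
    (hU1 : Uᵀ * U = 1) (hU2 : U * Uᵀ = 1)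
    (lam lam' : Ω → Fin n → ℝ)
    (hint : ∀ a b, Integrable (fun ω => lam ω a * lam' ω b) μ)
    (Klam : Matrix (Fin n) (Fin n) ℝ)
    (hKlam : ∀ a b, Klam a b = ∫ ω, lam ω a * lam' ω b ∂μ) :
    (Matrix.of fun i j =>
        ∫ ω, ((U * Matrix.diagonal (lam ω) * Uᵀ) * M *
              (U * Matrix.diagonal (lam' ω) * Uᵀ)) i j ∂μ)
      = U * Matrix.hadamard Klam (Uᵀ * M * U) * Uᵀ := by
  ext i j
  have entry : ∀ X : Matrix (Fin n) (Fin n) ℝ,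
      (U * X * Uᵀ) i j = ∑ b, ∑ a, U i a * X a b * U j b := by
    intro X
    rw [Matrix.mul_apply]
    refine Finset.sum_congr rfl fun b _ => ?_
    rw [Matrix.transpose_apply, Matrix.mul_apply, Finset.sum_mul]
  have h1 : ∀ ω, ((U * Matrix.diagonal (lam ω) * Uᵀ) * M *
        (U * Matrix.diagonal (lam' ω) * Uᵀ)) i j
      = ∑ b, ∑ a, (U i a * (Uᵀ * M * U) a b * U j b) * (lam ω a * lam' ω b) := by
    intro ω
    have hm : (U * Matrix.diagonal (lam ω) * Uᵀ) * M * (U * Matrix.diagonal (lam' ω) * Uᵀ)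
        = U * (Matrix.diagonal (lam ω) * (Uᵀ * M * U) * Matrix.diagonal (lam' ω)) * Uᵀ := by
      simp only [Matrix.mul_assoc]
    rw [hm, entry]
    refine Finset.sum_congr rfl fun b _ => Finset.sum_congr rfl fun a _ => ?_
    rw [Matrix.mul_diagonal, Matrix.diagonal_mul]
    ring
  simp only [Matrix.of_apply]
  calc (∫ ω, ((U * Matrix.diagonal (lam ω) * Uᵀ) * M *
        (U * Matrix.diagonal (lam' ω) * Uᵀ)) i j ∂μ)
      = ∫ ω, ∑ b, ∑ a, (U i a * (Uᵀ * M * U) a b * U j b) * (lam ω a * lam' ω b) ∂μ := by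
        simp only [h1]
    _ = ∑ b, ∑ a, ∫ ω, (U i a * (Uᵀ * M * U) a b * U j b) * (lam ω a * lam' ω b) ∂μ := by
        rw [integral_finset_sum]
        · exact Finset.sum_congr rfl fun b _ => integral_finset_sum _
            (fun a _ => (hint a b).const_mul _)
        · exact fun b _ => integrable_finset_sum _ fun a _ => (hint a b).const_mul _
    _ = ∑ b, ∑ a, (U i a * (Uᵀ * M * U) a b * U j b) * Klam a b := by
        refine Finset.sum_congr rfl fun b _ => Finset.sum_congr rfl fun a _ => ?_
        rw [integral_const_mul, hKlam]
    _ = (U * Matrix.hadamard Klam (Uᵀ * M * U) * Uᵀ) i j := by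
        rw [entry]
        refine Finset.sum_congr rfl fun b _ => Finset.sum_congr rfl fun a _ => ?_
        rw [Matrix.hadamard_apply]
        ring
end
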